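/- Let X ⊆ ℝ^d be a G-stable subset (g·x ∈ X for every g ∈ G and x ∈ X). Then the map induced by π|X from the quotient topological space X/G (the quotient of X by the equivalence relation x ∼ y ⟺ ∃ g ∈ G, y = g·x, equipped with the quotient topology) to π(X) (equipped with the subspace topology of ℝ^m) is a homeomorphism. -/

import Mathlib

open MvPolynomial

/-- The matrix associated to an element of a subgroup of the orthogonal group `O(d, ℝ)`. -/
def matOf {d : ℕ} (G : Subgroup (Matrix.orthogonalGroup (Fin d) ℝ)) (g : G) :
    Matrix (Fin d) (Fin d) ℝ :=
  ((g : Matrix.orthogonalGroup (Fin d) ℝ) : Matrix (Fin d) (Fin d) ℝ)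

open Matrix
lemma matOf_mul {d : ℕ} (G : Subgroup (Matrix.orthogonalGroup (Fin d) ℝ)) (g h : G) :
    matOf G (g * h) = matOf G g * matOf G h := rfl

lemma matOf_one {d : ℕ} (G : Subgroup (Matrix.orthogonalGroup (Fin d) ℝ)) :
    matOf G 1 = 1 := rfl

lemma matOf_orth {d : ℕ} (G : Subgroup (Matrix.orthogonalGroup (Fin d) ℝ)) (g : G) :
    (matOf G g)ᵀ * matOf G g = 1 := by
  have := (Matrix.mem_orthogonalGroup_iff' (Fin d) ℝ).mp (g : Matrix.orthogonalGroup (Fin d) ℝ).2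
  simpa [Matrix.star_eq_conjTranspose, matOf] using this

noncomputable def sigP {d : ℕ} (G : Subgroup (Matrix.orthogonalGroup (Fin d) ℝ)) (g : G) :
    Fin d → MvPolynomial (Fin d) ℝ :=
  fun i => ∑ j, C (matOf G g i j) * X j

lemma eval_aeval_sigP {d : ℕ} (G : Subgroup (Matrix.orthogonalGroup (Fin d) ℝ)) (g : G)
    (F : MvPolynomial (Fin d) ℝ) (w : Fin d → ℝ) :
    eval w (aeval (sigP G g) F) = eval ((matOf G g).mulVec w) F := by
  rw [aeval_def, eval_eval₂]
  have h2 : (fun i => eval w (sigP G g i)) = (matOf G g).mulVec w := by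
    funext i
    simp [sigP, Matrix.mulVec, dotProduct]
  rw [h2]
  congr 1
  ext r : 1
  simp

lemma eval_eq_on_adjoin {d m : ℕ} (p : Fin m → MvPolynomial (Fin d) ℝ)
    (x y : Fin d → ℝ) (hxy : ∀ i, eval x (p i) = eval y (p i))
    {f : MvPolynomial (Fin d) ℝ} (hf : f ∈ Algebra.adjoin ℝ (Set.range p)) :
    eval x f = eval y f := by
  induction hf using Algebra.adjoin_induction with
  | mem q hq => obtain ⟨i, rfl⟩ := hq; exact hxy i
  | algebraMap r => simp [MvPolynomial.algebraMap_eq]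
  | add a b ha hb iha ihb => simp [iha, ihb]
  | mul a b ha hb iha ihb => simp [iha, ihb]

lemma separation {d m : ℕ} (G : Subgroup (Matrix.orthogonalGroup (Fin d) ℝ)) [Finite G]
    (p : Fin m → MvPolynomial (Fin d) ℝ)
    (hgen : ∀ f : MvPolynomial (Fin d) ℝ,
      (∀ (g : G) (x : Fin d → ℝ), eval ((matOf G g).mulVec x) f = eval x f) →
        f ∈ Algebra.adjoin ℝ (Set.range p))
    (x y : Fin d → ℝ) (hxy : ∀ i, eval x (p i) = eval y (p i)) :
    ∃ g : G, y = (matOf G g).mulVec x := by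
  by_contra hc
  push_neg at hc
  have : Fintype G := Fintype.ofFinite G
  set F : MvPolynomial (Fin d) ℝ :=
    ∏ g : G, ∑ i, (X i - C ((matOf G g).mulVec x i)) ^ 2 with hFdef
  have hF : ∀ w, eval w F = ∏ g : G, ∑ i, (w i - (matOf G g).mulVec x i) ^ 2 := by
    intro w; simp [hFdef]
  have hFx : ∀ g : G, eval ((matOf G g).mulVec x) F = 0 := by
    intro g
    rw [hF]
    apply Finset.prod_eq_zero (Finset.mem_univ g)
    simp
  have hne : ∀ g g' : G, (matOf G g).mulVec y ≠ (matOf G g').mulVec x := by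
    intro g g' he
    apply hc (g⁻¹ * g')
    have : (matOf G g⁻¹).mulVec ((matOf G g).mulVec y)
        = (matOf G g⁻¹).mulVec ((matOf G g').mulVec x) := by rw [he]
    rwa [Matrix.mulVec_mulVec, Matrix.mulVec_mulVec, ← matOf_mul, ← matOf_mul,
      inv_mul_cancel, matOf_one, Matrix.one_mulVec] at this
  have hFy : ∀ g : G, 0 < eval ((matOf G g).mulVec y) F := by
    intro g
    rw [hF]
    apply Finset.prod_pos
    intro g' _
    have hne' := hne g g'
    have : ∃ i, (matOf G g).mulVec y i ≠ (matOf G g').mulVec x i := by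
      by_contra hcc
      push_neg at hcc
      exact hne' (funext hcc)
    obtain ⟨i, hi⟩ := this
    apply Finset.sum_pos' (fun j _ => sq_nonneg _) ⟨i, Finset.mem_univ i, by have := sub_ne_zero.mpr hi; positivity⟩
  set f : MvPolynomial (Fin d) ℝ := ∑ g : G, aeval (sigP G g) F with hfdef
  have hfeval : ∀ w, eval w f = ∑ g : G, eval ((matOf G g).mulVec w) F := by
    intro w
    rw [hfdef, map_sum]
    exact Finset.sum_congr rfl fun g _ => eval_aeval_sigP G g F w
  have hfinv : ∀ (h : G) (w : Fin d → ℝ), eval ((matOf G h).mulVec w) f = eval w f := by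
    intro h w
    rw [hfeval, hfeval]
    refine Fintype.sum_equiv (Equiv.mulRight h) _ _ fun g => ?_
    rw [Matrix.mulVec_mulVec, ← matOf_mul]
    rfl
  have hxyf : eval x f = eval y f := eval_eq_on_adjoin p x y hxy (hgen f hfinv)
  have h0 : eval x f = 0 := by
    rw [hfeval]; exact Finset.sum_eq_zero fun g _ => hFx g
  have hpos : 0 < eval y f := by
    rw [hfeval]
    exact Finset.sum_pos (fun g _ => hFy g) Finset.univ_nonempty
  rw [← hxyf, h0] at hpos
  exact lt_irrefl _ hpos

lemma eval_aeval_gen {n k : ℕ} (q : Fin n → MvPolynomial (Fin k) ℝ)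
    (F : MvPolynomial (Fin n) ℝ) (w : Fin k → ℝ) :
    eval w (aeval q F) = eval (fun i => eval w (q i)) F := by
  rw [aeval_def, eval_eval₂]
  congr 1
  ext r : 1
  simp

lemma sumsq_mulVec {d : ℕ} (A : Matrix (Fin d) (Fin d) ℝ) (hA : Aᵀ * A = 1)
    (x : Fin d → ℝ) : ∑ i, (A.mulVec x i) ^ 2 = ∑ i, x i ^ 2 := by
  have h1 : A.mulVec x ⬝ᵥ A.mulVec x = x ⬝ᵥ x := by
    rw [Matrix.dotProduct_mulVec]
    have h2 : (A *ᵥ x) ᵥ* A = x := by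
      rw [← Matrix.mulVec_transpose, Matrix.mulVec_mulVec, hA, Matrix.one_mulVec]
    rw [h2]
  simpa [dotProduct, sq] using h1

/-- If `X ⊆ ℝ^d` is `G`-stable, the map induced by `π|X` from the quotient topological space
`X/G` (quotient of `X` by the orbit equivalence relation, with the quotient topology) to
`π(X)` (with the subspace topology) is a homeomorphism. -/
theorem stmt3 {d m : ℕ}
    (G : Subgroup (Matrix.orthogonalGroup (Fin d) ℝ)) [Finite G]
    (p : Fin m → MvPolynomial (Fin d) ℝ)
    (hinv : ∀ (i : Fin m) (g : G) (x : Fin d → ℝ),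
      eval ((matOf G g).mulVec x) (p i) = eval x (p i))
    (hgen : ∀ f : MvPolynomial (Fin d) ℝ,
      (∀ (g : G) (x : Fin d → ℝ), eval ((matOf G g).mulVec x) f = eval x f) →
        f ∈ Algebra.adjoin ℝ (Set.range p))
    (π : (Fin d → ℝ) → (Fin m → ℝ))
    (hπ : ∀ (x : Fin d → ℝ) (i : Fin m), π x i = eval x (p i))
    (X : Set (Fin d → ℝ))
    (hX : ∀ (g : G), ∀ x ∈ X, (matOf G g).mulVec x ∈ X)
    (s : Setoid ↥X)
    (hs : ∀ a b : ↥X, s.r a b ↔ ∃ g : G, (b : Fin d → ℝ) = (matOf G g).mulVec ↑a) :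
    ∃ h : Quotient s ≃ₜ ↥(π '' X),
      ∀ x : ↥X, ((h (Quotient.mk s x) : (Fin m → ℝ))) = π ↑x := by
  classical
  -- π is continuous
  have hπfun : π = fun x i => eval x (p i) := funext fun x => funext (hπ x)
  have hπc : Continuous π := by
    rw [hπfun]; exact continuous_pi fun i => MvPolynomial.continuous_eval (p i)
  -- π is G-invariant
  have hπg : ∀ (g : G) (x : Fin d → ℝ), π ((matOf G g).mulVec x) = π x := by
    intro g x; funext i; rw [hπ, hπ, hinv]
  -- separation
  have sep : ∀ x y : Fin d → ℝ, π x = π y → ∃ g : G, y = (matOf G g).mulVec x := by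
    intro x y hxy
    exact separation G p hgen x y fun i => by rw [← hπ, ← hπ, hxy]
  -- the squared-norm polynomial
  obtain ⟨Q, hQ⟩ : ∃ Q : MvPolynomial (Fin m) ℝ,
      ∀ x : Fin d → ℝ, ∑ i, x i ^ 2 = eval (π x) Q := by
    have hmem : (∑ i, (MvPolynomial.X i : MvPolynomial (Fin d) ℝ) ^ 2) ∈
        Algebra.adjoin ℝ (Set.range p) := by
      apply hgen
      intro g x
      have horth := matOf_orth G g
      have := sumsq_mulVec (matOf G g) horth x
      simpa using this
    rw [Algebra.adjoin_range_eq_range_aeval, AlgHom.mem_range] at hmem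
    obtain ⟨Q, hQ⟩ := hmem
    refine ⟨Q, fun x => ?_⟩
    have := eval_aeval_gen p Q x
    rw [hQ] at this
    have hπx : (fun i => eval x (p i)) = π x := by funext i; rw [hπ]
    rw [hπx] at this
    simpa using this
  -- the map on X
  set f0 : ↥X → ↥(π '' X) := fun x => ⟨π ↑x, ⟨↑x, x.2, rfl⟩⟩ with hf0
  have hwd : ∀ a b : ↥X, s.r a b → f0 a = f0 b := by
    intro a b hab
    obtain ⟨g, hg⟩ := (hs a b).mp hab
    apply Subtype.ext
    show π ↑a = π ↑b
    rw [hg, hπg]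
  set flift : Quotient s → ↥(π '' X) := Quotient.lift f0 hwd with hflift
  have hbij : Function.Bijective flift := by
    constructor
    · intro q₁ q₂
      induction q₁ using Quotient.ind
      induction q₂ using Quotient.ind
      rename_i a b
      intro hab
      have hab' : π ↑a = π ↑b := congrArg Subtype.val hab
      obtain ⟨g, hg⟩ := sep (↑a) (↑b) hab'
      exact Quot.sound ((hs a b).mpr ⟨g, hg⟩)
    · rintro ⟨y, x, hxX, rfl⟩
      exact ⟨Quotient.mk s ⟨x, hxX⟩, rfl⟩
  set e : Quotient s ≃ ↥(π '' X) := Equiv.ofBijective flift hbij with he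
  have hecont : Continuous e := by
    show Continuous flift
    apply Continuous.quotient_lift
    exact Continuous.subtype_mk (hπc.comp continuous_subtype_val) _
  -- key sequential claim
  have key : ∀ (v : ℕ → ↥(π '' X)) (y : ↥(π '' X)), Filter.Tendsto v Filter.atTop (nhds y) →
      ∃ φ : ℕ → ℕ, StrictMono φ ∧
        Filter.Tendsto (fun k => e.symm (v (φ k))) Filter.atTop (nhds (e.symm y)) := by
    intro v y hv
    -- representatives
    set a : ℕ → ↥X := fun n => (e.symm (v n)).out with ha
    have hπa : ∀ n, π ↑(a n) = ((v n : Fin m → ℝ)) := by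
      intro n
      have h1 : e (e.symm (v n)) = v n := e.apply_symm_apply _
      have h2 : Quotient.mk s (a n) = e.symm (v n) := Quotient.out_eq _
      rw [← h2] at h1
      exact congrArg Subtype.val h1
    set b : ↥X := (e.symm y).out with hb
    have hπb : π ↑b = (y : Fin m → ℝ) := by
      have h1 : e (e.symm y) = y := e.apply_symm_apply _
      have h2 : Quotient.mk s b = e.symm y := Quotient.out_eq _
      rw [← h2] at h1
      exact congrArg Subtype.val h1
    -- boundedness of the representatives
    have hvlim : Filter.Tendsto (fun n => ((v n : Fin m → ℝ))) Filter.atTop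
        (nhds (y : Fin m → ℝ)) := (continuous_subtype_val.tendsto _).comp hv
    have hQlim : Filter.Tendsto (fun n => eval ((v n : Fin m → ℝ)) Q) Filter.atTop
        (nhds (eval (y : Fin m → ℝ) Q)) :=
      ((MvPolynomial.continuous_eval Q).tendsto _).comp hvlim
    obtain ⟨M, hM⟩ : ∃ M : ℝ, ∀ n, ∑ i, ((a n : Fin d → ℝ) i) ^ 2 ≤ M := by
      obtain ⟨M, hM⟩ := hQlim.bddAbove_range
      refine ⟨M, fun n => ?_⟩
      have : ∑ i, ((a n : Fin d → ℝ) i) ^ 2 = eval ((v n : Fin m → ℝ)) Q := by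
        rw [← hπa n]; exact hQ _
      rw [this]
      exact hM ⟨n, rfl⟩
    have hMnonneg : 0 ≤ M := le_trans (Finset.sum_nonneg fun i _ => sq_nonneg _) (hM 0)
    have hball : ∀ n, (a n : Fin d → ℝ) ∈ Metric.closedBall (0 : Fin d → ℝ) (Real.sqrt M) := by
      intro n
      rw [Metric.mem_closedBall, dist_zero_right]
      rw [pi_norm_le_iff_of_nonneg (Real.sqrt_nonneg M)]
      intro i
      rw [Real.norm_eq_abs, ← Real.sqrt_sq_eq_abs]
      apply Real.sqrt_le_sqrt
      calc ((a n : Fin d → ℝ) i) ^ 2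
          ≤ ∑ j, ((a n : Fin d → ℝ) j) ^ 2 :=
            Finset.single_le_sum (f := fun j => ((a n : Fin d → ℝ) j) ^ 2)
              (fun j _ => sq_nonneg _) (Finset.mem_univ i)
        _ ≤ M := hM n
    obtain ⟨z, _, φ, hφmono, hφlim⟩ :=
      tendsto_subseq_of_bounded Metric.isBounded_closedBall hball
    -- π z = π b
    have hπz : π z = π ↑b := by
      have l1 : Filter.Tendsto (fun k => π ((a (φ k) : Fin d → ℝ))) Filter.atTop (nhds (π z)) :=
        (hπc.tendsto _).comp hφlim
      have l2 : Filter.Tendsto (fun k => π ((a (φ k) : Fin d → ℝ))) Filter.atTop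
          (nhds ((y : Fin m → ℝ))) := by
        have : (fun k => π ((a (φ k) : Fin d → ℝ))) = fun k => ((v (φ k) : Fin m → ℝ)) := by
          funext k; exact hπa (φ k)
        rw [this]
        exact hvlim.comp (hφmono.tendsto_atTop)
      rw [hπb]
      exact tendsto_nhds_unique l1 l2
    obtain ⟨g, hg⟩ := sep z (↑b) hπz
    -- g · a (φ k) → b
    have hmulc : Continuous fun w : Fin d → ℝ => (matOf G g).mulVec w := by
      apply continuous_pi
      intro i
      simp only [Matrix.mulVec, dotProduct]
      exact continuous_finset_sum _ fun j _ => (continuous_const.mul (continuous_apply j))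
    have hglim : Filter.Tendsto (fun k => (matOf G g).mulVec ((a (φ k) : Fin d → ℝ)))
        Filter.atTop (nhds ((b : Fin d → ℝ))) := by
      rw [hg]
      exact (hmulc.tendsto _).comp hφlim
    set w : ℕ → ↥X := fun k => ⟨(matOf G g).mulVec ((a (φ k) : Fin d → ℝ)),
      hX g _ (a (φ k)).2⟩ with hw
    have hwlim : Filter.Tendsto w Filter.atTop (nhds b) := by
      rw [tendsto_subtype_rng]
      exact hglim
    have hqlim : Filter.Tendsto (fun k => Quotient.mk s (w k)) Filter.atTop
        (nhds (Quotient.mk s b)) := (continuous_quotient_mk'.tendsto _).comp hwlim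
    refine ⟨φ, hφmono, ?_⟩
    have heq : (fun k => e.symm (v (φ k))) = fun k => Quotient.mk s (w k) := by
      funext k
      rw [← Quotient.out_eq (e.symm (v (φ k)))]
      exact Quot.sound ((hs (a (φ k)) (w k)).mpr ⟨g, rfl⟩)
    rw [heq]
    have hout : Quotient.mk s b = e.symm y := Quotient.out_eq _
    rw [← hout]
    exact hqlim
  have hsymmcont : Continuous e.symm := by
    rw [continuous_iff_seqContinuous]
    intro u y hu
    apply Filter.tendsto_of_subseq_tendsto
    intro ns hns
    obtain ⟨φ, _, hφ⟩ := key (fun n => u (ns n)) y (hu.comp hns)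
    exact ⟨φ, hφ⟩
  refine ⟨⟨e, hecont, hsymmcont⟩, fun x => rfl⟩
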